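/- Let φ ∈ L^∞([0,1]), α ∈ [0,1] and 1 < p < ∞. The weighted translation operator T = T_{φ,α} on X = L^p([0,1]) does not satisfy the Supercyclicity Criterion: there do not exist dense subsets X₀ and Y₀ of X, a strictly increasing sequence (n_k) of positive integers, a sequence (λ_{n_k}) of non-zero complex numbers and maps S_{n_k} : Y₀ → X such that (i) λ_{n_k} T^{n_k} x → 0 as k → ∞ for every x ∈ X₀, (ii) λ_{n_k}^{-1} S_{n_k} y → 0 as k → ∞ for every y ∈ Y₀, and (iii) T^{n_k} S_{n_k} y → y as k → ∞ for every y ∈ Y₀. -/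

import Mathlib

open MeasureTheory Set Filter Topology Polynomial
open scoped ENNReal NNReal

/-- Lebesgue measure restricted to `[0,1]`. -/
noncomputable def μ01 : Measure ℝ := volume.restrict (Set.Icc 0 1)

/-- `T` is the Bishop operator `T_α` on `L^p([0,1])`, i.e.
`(T f)(x) = x · f({x + α})` for a.e. `x ∈ [0,1]`, where `{·}` is the fractional part. -/
def IsBishopOp (p : ℝ≥0∞) [Fact (1 ≤ p)] (α : ℝ)
    (T : Lp ℂ p μ01 →L[ℂ] Lp ℂ p μ01) : Prop :=
  ∀ f : Lp ℂ p μ01, ∀ᵐ x ∂μ01, (T f) x = (x : ℂ) * f (Int.fract (x + α))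

/-- `T` is the weighted translation operator `T_{φ,α}` on `L^p([0,1])`, i.e.
`(T f)(x) = φ(x) · f({x + α})` for a.e. `x ∈ [0,1]`. -/
def IsWTOp (p : ℝ≥0∞) [Fact (1 ≤ p)] (φ : ℝ → ℂ) (α : ℝ)
    (T : Lp ℂ p μ01 →L[ℂ] Lp ℂ p μ01) : Prop :=
  ∀ f : Lp ℂ p μ01, ∀ᵐ x ∂μ01, (T f) x = φ x * f (Int.fract (x + α))

/-! ### Auxiliary lemmas -/

lemma μ01_eq_ico : μ01 = volume.restrict (Set.Ico 0 1) :=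
  (Measure.restrict_congr_set Ico_ae_eq_Icc).symm

instance : IsProbabilityMeasure μ01 :=
  ⟨by simp [μ01, Real.volume_Icc]⟩

lemma measurable_psi (β : ℝ) : Measurable (fun t : ℝ => Int.fract (t + β)) :=
  (measurable_id.add_const β).fract

lemma map_add_restrict (c : ℝ) (s : Set ℝ) (hs : MeasurableSet s) :
    Measure.map (fun t : ℝ => t + c) (volume.restrict ((fun t : ℝ => t + c) ⁻¹' s))
      = volume.restrict s := by
  rw [← Measure.restrict_map (measurable_add_const c) hs,
    map_add_right_eq_self volume c]

lemma mp_psi (β : ℝ) : MeasurePreserving (fun t : ℝ => Int.fract (t + β)) μ01 μ01 := by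
  refine ⟨measurable_psi β, ?_⟩
  set γ := Int.fract β with hγ
  have hγ0 : 0 ≤ γ := Int.fract_nonneg β
  have hγ1 : γ < 1 := Int.fract_lt_one β
  have key1 : ∀ t ∈ Ico (0:ℝ) (1 - γ), Int.fract (t + β) = t + γ := by
    intro t ht
    have : t + β = t + γ + (⌊β⌋ : ℝ) := by rw [hγ]; push_cast [Int.fract]; ring
    rw [this, Int.fract_add_intCast, Int.fract_eq_self.2 ⟨by linarith [ht.1], by linarith [ht.2]⟩]
  have key2 : ∀ t ∈ Ico (1 - γ) (1:ℝ), Int.fract (t + β) = t + (γ - 1) := by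
    intro t ht
    have h1 : t + β = (t + (γ - 1)) + ((⌊β⌋ + 1 : ℤ) : ℝ) := by
      rw [hγ]; push_cast [Int.fract]; ring
    rw [h1, Int.fract_add_intCast,
      Int.fract_eq_self.2 ⟨by linarith [ht.1], by linarith [ht.2, hγ1]⟩]
  have hsplit : volume.restrict (Ico (0:ℝ) 1)
      = volume.restrict (Ico (0:ℝ) (1 - γ)) + volume.restrict (Ico (1 - γ) (1:ℝ)) := by
    rw [← Measure.restrict_union (Ico_disjoint_Ico_same) measurableSet_Ico,
      Ico_union_Ico_eq_Ico (by linarith) (by linarith)]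
  rw [μ01_eq_ico, hsplit, Measure.map_add _ _ (measurable_psi β)]
  have e1 : Measure.map (fun t : ℝ => Int.fract (t + β)) (volume.restrict (Ico (0:ℝ) (1 - γ)))
      = volume.restrict (Ico γ 1) := by
    rw [Measure.map_congr ((ae_restrict_iff' measurableSet_Ico).2 (ae_of_all _ key1))]
    have : Ico (0:ℝ) (1 - γ) = (fun t : ℝ => t + γ) ⁻¹' Ico γ 1 := by
      rw [preimage_add_const_Ico]; norm_num
    rw [this, map_add_restrict γ _ measurableSet_Ico]
  have e2 : Measure.map (fun t : ℝ => Int.fract (t + β)) (volume.restrict (Ico (1 - γ) (1:ℝ)))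
      = volume.restrict (Ico 0 γ) := by
    rw [Measure.map_congr ((ae_restrict_iff' measurableSet_Ico).2 (ae_of_all _ key2))]
    have : Ico (1 - γ) (1:ℝ) = (fun t : ℝ => t + (γ - 1)) ⁻¹' Ico 0 γ := by
      rw [preimage_add_const_Ico]; norm_num
    rw [this, map_add_restrict (γ - 1) _ measurableSet_Ico]
  rw [e1, e2, add_comm, ← Measure.restrict_union (Ico_disjoint_Ico_same) measurableSet_Ico,
    Ico_union_Ico_eq_Ico (by linarith) (by linarith)]
  exact hsplit

lemma ae_mem_ico : ∀ᵐ t ∂μ01, t ∈ Ico (0:ℝ) 1 := by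
  rw [μ01_eq_ico]
  exact (ae_restrict_iff' measurableSet_Ico).2 (ae_of_all _ fun t ht => ht)

/-- The weight of the `m`-th power of a weighted translation. -/
noncomputable def Wt (φ : ℝ → ℂ) (α : ℝ) : ℕ → ℝ → ℂ
  | 0 => fun _ => 1
  | (m+1) => fun t => Wt φ α m t * φ (Int.fract (t + (m : ℝ) * α))

lemma pow_formula {p : ℝ≥0∞} [Fact (1 ≤ p)] {φ : ℝ → ℂ} {α : ℝ}
    {T : Lp ℂ p μ01 →L[ℂ] Lp ℂ p μ01} (hT : IsWTOp p φ α T) (m : ℕ) (f : Lp ℂ p μ01) :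
    ∀ᵐ t ∂μ01, ((T ^ m) f) t = Wt φ α m t * f (Int.fract (t + (m : ℝ) * α)) := by
  induction m generalizing f with
  | zero =>
      have h0 : (T ^ 0) f = f := by rw [pow_zero]; rfl
      rw [h0]
      filter_upwards [ae_mem_ico] with t ht
      simp [Wt, Int.fract_eq_self.2 ⟨ht.1, ht.2⟩]
  | succ m ih =>
      have hsucc : (T ^ (m+1)) f = (T ^ m) (T f) := by
        rw [pow_succ]; exact ContinuousLinearMap.mul_apply _ _ _
      rw [hsucc]
      have hTf := (mp_psi ((m : ℝ) * α)).quasiMeasurePreserving.ae (hT f)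
      filter_upwards [ih (T f), hTf] with t h1 h2
      rw [h1, h2]
      have hfr : Int.fract (Int.fract (t + (m : ℝ) * α) + α)
          = Int.fract (t + ((m+1 : ℕ) : ℝ) * α) := by
        have h9 : Int.fract (t + (m : ℝ) * α) + α
            = (t + ((m+1 : ℕ) : ℝ) * α) - ((⌊t + (m : ℝ) * α⌋ : ℤ) : ℝ) := by
          rw [Int.fract]; push_cast; ring
        rw [h9, Int.fract_sub_intCast]
      rw [hfr]
      simp only [Wt]
      ring

/-- Chebyshev-type estimate tailored to our needs. -/
lemma cheb {p : ℝ≥0∞} (hp0 : p ≠ 0) (hp' : p ≠ ∞) (hq1 : 1 ≤ p.toReal) {f : ℝ → ℂ}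
    (hf : AEStronglyMeasurable f μ01) {a b : ℝ} (ha : 0 < a) (hb : 0 ≤ b) (hba : b ≤ a)
    (hfb : eLpNorm f p μ01 ≤ ENNReal.ofReal b) :
    μ01 {t | ENNReal.ofReal a ≤ (‖f t‖₊ : ℝ≥0∞)} ≤ ENNReal.ofReal (b / a) := by
  have hane : ENNReal.ofReal a ≠ 0 := by simp [ENNReal.ofReal_eq_zero, not_le, ha]
  have h1 := meas_ge_le_mul_pow_eLpNorm_enorm μ01 hp0 hp' hf hane (by simp)
  have h2 : (ENNReal.ofReal a)⁻¹ ^ p.toReal * eLpNorm f p μ01 ^ p.toReal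
      ≤ (ENNReal.ofReal (b / a)) ^ p.toReal := by
    rw [← ENNReal.mul_rpow_of_nonneg _ _ (by positivity)]
    refine ENNReal.rpow_le_rpow ?_ (by positivity)
    rw [ENNReal.ofReal_div_of_pos ha, div_eq_mul_inv, mul_comm]
    exact mul_le_mul_left hfb _
  have h3 : (ENNReal.ofReal (b / a)) ^ p.toReal ≤ ENNReal.ofReal (b / a) := by
    have hle1 : ENNReal.ofReal (b / a) ≤ 1 := by
      rw [ENNReal.ofReal_le_one]
      exact (div_le_one ha).2 hba
    calc (ENNReal.ofReal (b / a)) ^ p.toReal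
        ≤ (ENNReal.ofReal (b / a)) ^ (1:ℝ) :=
          ENNReal.rpow_le_rpow_of_exponent_ge hle1 hq1
      _ = ENNReal.ofReal (b / a) := ENNReal.rpow_one _
  exact le_trans h1 (le_trans h2 h3)

set_option maxHeartbeats 1000000 in
/-- The weighted translation operator `T = T_{φ,α}` on `L^p([0,1])` does not
satisfy the Supercyclicity Criterion: there do not exist dense subsets `X₀, Y₀`, a strictly
increasing sequence `(n_k)` of positive integers, non-zero complex numbers `(λ_{n_k})` and
maps `S_{n_k} : Y₀ → X` with `λ_{n_k} T^{n_k} x → 0` on `X₀`, `λ_{n_k}⁻¹ S_{n_k} y → 0` on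
`Y₀` and `T^{n_k} S_{n_k} y → y` on `Y₀`. -/
theorem weighted_translation_not_supercyclicity_criterion (p : ℝ≥0∞) [Fact (1 ≤ p)]
    (hp : 1 < p) (hp' : p ≠ ∞)
    (φ : ℝ → ℂ) (hφ : MemLp φ ⊤ μ01)
    (α : ℝ) (hα : α ∈ Set.Icc (0 : ℝ) 1)
    (T : Lp ℂ p μ01 →L[ℂ] Lp ℂ p μ01) (hT : IsWTOp p φ α T) :
    ¬ ∃ (X₀ Y₀ : Set (Lp ℂ p μ01)) (n : ℕ → ℕ) (lam : ℕ → ℂ)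
        (S : ℕ → Lp ℂ p μ01 → Lp ℂ p μ01),
      Dense X₀ ∧ Dense Y₀ ∧ StrictMono n ∧ (∀ k, 0 < n k) ∧ (∀ k, lam k ≠ 0) ∧
      (∀ x ∈ X₀, Tendsto (fun k => lam k • (T ^ n k) x) atTop (𝓝 0)) ∧
      (∀ y ∈ Y₀, Tendsto (fun k => (lam k)⁻¹ • S k y) atTop (𝓝 0)) ∧
      (∀ y ∈ Y₀, Tendsto (fun k => (T ^ n k) (S k y)) atTop (𝓝 y)) := by
  rintro ⟨X₀, Y₀, n, lam, S, hX₀, hY₀, -, -, hlam, h1, h2, h3⟩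
  have hp0 : p ≠ 0 := by
    intro h; rw [h] at hp; exact (not_lt.2 zero_le) hp
  have hq1 : (1:ℝ) ≤ p.toReal := by
    have := ENNReal.toReal_mono hp' hp.le
    simpa using this
  -- the constant function 1
  set c₁ : Lp ℂ p μ01 := (memLp_const (1:ℂ)).toLp (fun _ => (1:ℂ)) with hc₁def
  have hc₁ : ⇑c₁ =ᵐ[μ01] fun _ => (1:ℂ) := MemLp.coeFn_toLp _
  obtain ⟨y, hyY, hy⟩ := hY₀.exists_dist_lt c₁ (show (0:ℝ) < 1/10 by norm_num)
  obtain ⟨x, hxX, hx⟩ := hX₀.exists_dist_lt c₁ (show (0:ℝ) < 1/16 by norm_num)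
  obtain ⟨K1, hK1⟩ := Metric.tendsto_atTop.1 (h3 y hyY) (1/40) (by norm_num)
  obtain ⟨K2, hK2⟩ := Metric.tendsto_atTop.1 (h2 y hyY) (1/64) (by norm_num)
  obtain ⟨K3, hK3⟩ := Metric.tendsto_atTop.1 (h1 x hxX) (1/2) (by norm_num)
  set k := max K1 (max K2 K3) with hkdef
  set m := n k with hmdef
  set l := lam k with hldef
  have hl : l ≠ 0 := hlam k
  have hlpos : (0:ℝ) < ‖l‖ := norm_pos_iff.2 hl
  set g : Lp ℂ p μ01 := S k y with hgdef
  set G : Lp ℂ p μ01 := (T ^ m) g with hGdef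
  have F1 : ‖G - y‖ < 1/40 := by
    have := hK1 k (le_max_left _ _); rwa [dist_eq_norm] at this
  have F2 : ‖l⁻¹ • g‖ < 1/64 := by
    have := hK2 k (le_trans (le_max_left _ _) (le_max_right _ _))
    rwa [dist_zero_right] at this
  have F3 : ‖l • (T ^ m) x‖ < 1/2 := by
    have := hK3 k (le_trans (le_max_right _ _) (le_max_right _ _))
    rwa [dist_zero_right] at this
  -- norm bounds
  have hg64 : ‖g‖ ≤ ‖l‖ * (1/64) := by
    have hgeq : g = l • (l⁻¹ • g) := by rw [smul_smul, mul_inv_cancel₀ hl, one_smul]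
    rw [hgeq, norm_smul]
    exact mul_le_mul_of_nonneg_left F2.le (norm_nonneg _)
  have hGc : ‖G - c₁‖ ≤ 1/8 := by
    have t1 : dist G c₁ ≤ dist G y + dist y c₁ := dist_triangle _ _ _
    have t2 : dist G y < 1/40 := by rwa [dist_eq_norm]
    have t3 : dist y c₁ < 1/10 := by rwa [dist_comm] at hy
    have : dist G c₁ ≤ 1/8 := by linarith
    rwa [dist_eq_norm] at this
  have hxc : ‖x - c₁‖ ≤ 1/16 := by
    have : dist x c₁ < 1/16 := by rwa [dist_comm] at hx
    rw [← dist_eq_norm]; linarith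
  -- measurable representatives
  set x' := (Lp.aestronglyMeasurable x).mk ⇑x with hx'def
  have hx's : StronglyMeasurable x' := (Lp.aestronglyMeasurable x).stronglyMeasurable_mk
  have hxx' : ⇑x =ᵐ[μ01] x' := (Lp.aestronglyMeasurable x).ae_eq_mk
  set g' := (Lp.aestronglyMeasurable g).mk ⇑g with hg'def
  have hg's : StronglyMeasurable g' := (Lp.aestronglyMeasurable g).stronglyMeasurable_mk
  have hgg' : ⇑g =ᵐ[μ01] g' := (Lp.aestronglyMeasurable g).ae_eq_mk
  set G' := (Lp.aestronglyMeasurable G).mk ⇑G with hG'def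
  have hG's : StronglyMeasurable G' := (Lp.aestronglyMeasurable G).stronglyMeasurable_mk
  have hGG' : ⇑G =ᵐ[μ01] G' := (Lp.aestronglyMeasurable G).ae_eq_mk
  -- the translation map
  set ψ : ℝ → ℝ := fun t => Int.fract (t + (m : ℝ) * α) with hψdef
  have hmpψ : MeasurePreserving ψ μ01 μ01 := mp_psi _
  -- the coupling identity
  have hgψ : (fun t => g (ψ t)) =ᵐ[μ01] (fun t => g' (ψ t)) :=
    hmpψ.quasiMeasurePreserving.ae_eq hgg'
  have hxψ : (fun t => x (ψ t)) =ᵐ[μ01] (fun t => x' (ψ t)) :=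
    hmpψ.quasiMeasurePreserving.ae_eq hxx'
  have Cpl : ∀ᵐ t ∂μ01,
      ‖((T ^ m) x) t‖ * ‖g' (ψ t)‖ = ‖G t‖ * ‖x' (ψ t)‖ := by
    filter_upwards [pow_formula hT m g, pow_formula hT m x, hgψ, hxψ] with t e1 e2 e3 e4
    have e3' : g (ψ t) = g' (ψ t) := e3
    have e4' : x (ψ t) = x' (ψ t) := e4
    rw [hGdef]
    rw [e1, e2, ← e3', ← e4']
    simp only [norm_mul]
    ring
  -- the bad sets
  set s : ℝ := ‖l‖ / 8 with hsdef
  have hs : (0:ℝ) < s := by positivity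
  set Bs := {t : ℝ | ENNReal.ofReal (1/2) ≤ (‖G' t - 1‖₊ : ℝ≥0∞)} with hBdef
  set Cs := {t : ℝ | ENNReal.ofReal s ≤ (‖g' t‖₊ : ℝ≥0∞)} with hCdef
  set Ds := {t : ℝ | ENNReal.ofReal (1/2) ≤ (‖x' t - 1‖₊ : ℝ≥0∞)} with hDdef
  have hmeasB : MeasurableSet Bs :=
    measurableSet_le measurable_const
      ((hG's.measurable.sub measurable_const).nnnorm.coe_nnreal_ennreal)
  have hmeasC : MeasurableSet Cs :=
    measurableSet_le measurable_const (hg's.measurable.nnnorm.coe_nnreal_ennreal)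
  have hmeasD : MeasurableSet Ds :=
    measurableSet_le measurable_const
      ((hx's.measurable.sub measurable_const).nnnorm.coe_nnreal_ennreal)
  -- eLpNorm computations
  have enorm_eq : ∀ h : Lp ℂ p μ01, eLpNorm (⇑h) p μ01 = ENNReal.ofReal ‖h‖ := by
    intro h
    rw [Lp.norm_def, ENNReal.ofReal_toReal (Lp.eLpNorm_ne_top h)]
  have eG : eLpNorm (fun t => G' t - 1) p μ01 ≤ ENNReal.ofReal (1/8) := by
    have : eLpNorm (fun t => G' t - 1) p μ01 = ENNReal.ofReal ‖G - c₁‖ := by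
      rw [← enorm_eq (G - c₁)]
      refine eLpNorm_congr_ae ?_
      filter_upwards [Lp.coeFn_sub G c₁, hGG', hc₁] with t d1 d2 d3
      rw [← d2]
      rw [d1]
      simp [d3]
    rw [this]
    exact ENNReal.ofReal_le_ofReal hGc
  have eX : eLpNorm (fun t => x' t - 1) p μ01 ≤ ENNReal.ofReal (1/16) := by
    have : eLpNorm (fun t => x' t - 1) p μ01 = ENNReal.ofReal ‖x - c₁‖ := by
      rw [← enorm_eq (x - c₁)]
      refine eLpNorm_congr_ae ?_
      filter_upwards [Lp.coeFn_sub x c₁, hxx', hc₁] with t d1 d2 d3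
      rw [← d2, d1]
      simp [d3]
    rw [this]
    exact ENNReal.ofReal_le_ofReal hxc
  have eg : eLpNorm g' p μ01 ≤ ENNReal.ofReal (‖l‖ * (1/64)) := by
    have : eLpNorm g' p μ01 = ENNReal.ofReal ‖g‖ := by
      rw [← enorm_eq g]
      exact (eLpNorm_congr_ae hgg').symm
    rw [this]
    exact ENNReal.ofReal_le_ofReal hg64
  -- Chebyshev bounds
  have cB : μ01 Bs ≤ ENNReal.ofReal ((1/8) / (1/2)) :=
    cheb hp0 hp' hq1 (hG's.sub stronglyMeasurable_const).aestronglyMeasurable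
      (by norm_num) (by norm_num) (by norm_num) eG
  have cC : μ01 Cs ≤ ENNReal.ofReal ((‖l‖ * (1/64)) / s) :=
    cheb hp0 hp' hq1 hg's.aestronglyMeasurable hs (by positivity)
      (by rw [hsdef]; linarith) eg
  have cD : μ01 Ds ≤ ENNReal.ofReal ((1/16) / (1/2)) :=
    cheb hp0 hp' hq1 (hx's.sub stronglyMeasurable_const).aestronglyMeasurable
      (by norm_num) (by norm_num) (by norm_num) eX
  have cB' : μ01 Bs ≤ ENNReal.ofReal (1/4) := by
    convert cB using 2; norm_num
  have cC' : μ01 Cs ≤ ENNReal.ofReal (1/8) := by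
    refine le_trans cC (le_of_eq ?_)
    congr 1
    rw [hsdef, div_eq_iff (ne_of_gt (by positivity : (0:ℝ) < ‖l‖/8))]
    ring
  have cD' : μ01 Ds ≤ ENNReal.ofReal (1/8) := by
    convert cD using 2; norm_num
  -- the union
  set U : Set ℝ := Bs ∪ (ψ ⁻¹' Cs ∪ ψ ⁻¹' Ds) with hUdef
  have hmeasU : MeasurableSet U :=
    hmeasB.union ((hmeasC.preimage hmpψ.measurable).union (hmeasD.preimage hmpψ.measurable))
  have hU : μ01 U ≤ ENNReal.ofReal (1/2) := by
    have u1 : μ01 U ≤ μ01 Bs + (μ01 (ψ ⁻¹' Cs) + μ01 (ψ ⁻¹' Ds)) :=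
      le_trans (measure_union_le _ _) (add_le_add le_rfl (measure_union_le _ _))
    rw [hmpψ.measure_preimage hmeasC.nullMeasurableSet,
      hmpψ.measure_preimage hmeasD.nullMeasurableSet] at u1
    calc μ01 U ≤ μ01 Bs + (μ01 Cs + μ01 Ds) := u1
      _ ≤ ENNReal.ofReal (1/4) + (ENNReal.ofReal (1/8) + ENNReal.ofReal (1/8)) :=
          add_le_add cB' (add_le_add cC' cD')
      _ = ENNReal.ofReal (1/2) := by
          rw [← ENNReal.ofReal_add (by norm_num) (by norm_num),
            ← ENNReal.ofReal_add (by norm_num) (by norm_num)]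
          norm_num
  have hmE : ENNReal.ofReal (1/2) ≤ μ01 Uᶜ := by
    rw [measure_compl hmeasU (measure_ne_top μ01 U), measure_univ]
    have h6 : (1 : ℝ≥0∞) - ENNReal.ofReal (1/2) ≤ 1 - μ01 U := tsub_le_tsub_left hU 1
    calc ENNReal.ofReal (1/2) = 1 - ENNReal.ofReal (1/2) := by
          rw [← ENNReal.ofReal_one, ← ENNReal.ofReal_sub _ (by norm_num)]; norm_num
      _ ≤ 1 - μ01 U := h6
  -- pointwise lower bound on the complement
  have key : ∀ᵐ t ∂(μ01.restrict Uᶜ), (2:ℝ) ≤ ‖(⇑(l • (T ^ m) x)) t‖ := by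
    have h7 : ∀ᵐ t ∂(μ01.restrict Uᶜ), t ∈ Uᶜ :=
      (ae_restrict_iff' hmeasU.compl).2 (ae_of_all _ fun t ht => ht)
    filter_upwards [h7, ae_restrict_of_ae Cpl, ae_restrict_of_ae hGG',
      ae_restrict_of_ae (Lp.coeFn_smul l ((T ^ m) x))] with t htU hCpl hGt hsm
    rw [mem_compl_iff, hUdef] at htU
    simp only [mem_union, not_or, mem_preimage, hBdef, hCdef, hDdef, mem_setOf_eq, not_le] at htU
    obtain ⟨n1, n2, n3⟩ := htU
    -- convert the ENNReal facts to real inequalities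
    have r1 : ‖G' t - 1‖ < 1/2 := by
      simp only [← enorm_eq_nnnorm, ← ofReal_norm] at n1
      exact (ENNReal.ofReal_lt_ofReal_iff (by norm_num)).1 n1
    have r2 : ‖g' (ψ t)‖ < s := by
      simp only [← enorm_eq_nnnorm, ← ofReal_norm] at n2
      exact (ENNReal.ofReal_lt_ofReal_iff hs).1 n2
    have r3 : ‖x' (ψ t) - 1‖ < 1/2 := by
      simp only [← enorm_eq_nnnorm, ← ofReal_norm] at n3
      exact (ENNReal.ofReal_lt_ofReal_iff (by norm_num)).1 n3
    -- lower bounds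
    have rG : (1/2:ℝ) ≤ ‖G' t‖ := by
      have := norm_sub_norm_le (1:ℂ) (1 - G' t)
      simp only [sub_sub_cancel] at this
      have h1n : ‖(1:ℂ)‖ = 1 := by simp
      have : ‖(1:ℂ)‖ - ‖1 - G' t‖ ≤ ‖G' t‖ := this
      rw [h1n, norm_sub_rev] at this
      linarith
    have rX : (1/2:ℝ) ≤ ‖x' (ψ t)‖ := by
      have := norm_sub_norm_le (1:ℂ) (1 - x' (ψ t))
      simp only [sub_sub_cancel] at this
      have h1n : ‖(1:ℂ)‖ = 1 := by simp
      have : ‖(1:ℂ)‖ - ‖1 - x' (ψ t)‖ ≤ ‖x' (ψ t)‖ := this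
      rw [h1n, norm_sub_rev] at this
      linarith
    -- combine with the coupling identity
    have hGt' : ‖G t‖ = ‖G' t‖ := by rw [hGt]
    have hc : ‖((T ^ m) x) t‖ * ‖g' (ψ t)‖ = ‖G' t‖ * ‖x' (ψ t)‖ := by
      rw [← hGt']; exact hCpl
    have ha0 : (0:ℝ) ≤ ‖((T ^ m) x) t‖ := norm_nonneg _
    have hprod : (1/4:ℝ) ≤ ‖((T ^ m) x) t‖ * s := by
      nlinarith [norm_nonneg (g' (ψ t)), norm_nonneg (x' (ψ t)), norm_nonneg (G' t)]
    have hsm' : ‖(⇑(l • (T ^ m) x)) t‖ = ‖l‖ * ‖((T ^ m) x) t‖ := by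
      rw [hsm]; simp [norm_smul]
    rw [hsm']
    have hl8 : ‖l‖ = 8 * s := by rw [hsdef]; ring
    nlinarith
  -- lower bound for the norm
  have hlow : ENNReal.ofReal 1 ≤ eLpNorm (⇑(l • (T ^ m) x)) p μ01 := by
    have hrne : μ01.restrict Uᶜ ≠ 0 := by
      intro h0
      have : μ01 Uᶜ = 0 := by
        rw [← Measure.restrict_apply_univ, h0]; rfl
      rw [this] at hmE
      simp at hmE
    have h10 : eLpNorm (fun _ : ℝ => (2:ℂ)) p (μ01.restrict Uᶜ)
        = (‖(2:ℂ)‖₊ : ℝ≥0∞) * (μ01 Uᶜ) ^ (1 / p.toReal) := by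
      rw [eLpNorm_const _ hp0 hrne, Measure.restrict_apply_univ, enorm_eq_nnnorm]
    have h9 : eLpNorm (fun _ : ℝ => (2:ℂ)) p (μ01.restrict Uᶜ)
        ≤ eLpNorm (⇑(l • (T ^ m) x)) p (μ01.restrict Uᶜ) := by
      refine eLpNorm_mono_ae ?_
      filter_upwards [key] with t ht
      simpa using ht
    have h8 : eLpNorm (⇑(l • (T ^ m) x)) p (μ01.restrict Uᶜ)
        ≤ eLpNorm (⇑(l • (T ^ m) x)) p μ01 :=
      eLpNorm_mono_measure _ Measure.restrict_le_self
    have h11 : ENNReal.ofReal (1/2) ≤ (μ01 Uᶜ) ^ (1 / p.toReal) := by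
      calc ENNReal.ofReal (1/2) = (ENNReal.ofReal (1/2)) ^ (1:ℝ) := (ENNReal.rpow_one _).symm
        _ ≤ (ENNReal.ofReal (1/2)) ^ (1 / p.toReal) := by
            refine ENNReal.rpow_le_rpow_of_exponent_ge ?_ ?_
            · exact ENNReal.ofReal_le_one.2 (by norm_num)
            · rw [div_le_one (by linarith)]; exact hq1
        _ ≤ (μ01 Uᶜ) ^ (1 / p.toReal) := by
            refine ENNReal.rpow_le_rpow hmE (by positivity)
    have h12 : ENNReal.ofReal 1 ≤ (‖(2:ℂ)‖₊ : ℝ≥0∞) * (μ01 Uᶜ) ^ (1 / p.toReal) := by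
      have h2n : (‖(2:ℂ)‖₊ : ℝ≥0∞) = ENNReal.ofReal 2 := by
        rw [← enorm_eq_nnnorm, ← ofReal_norm]; norm_num
      rw [h2n]
      calc ENNReal.ofReal 1 = ENNReal.ofReal 2 * ENNReal.ofReal (1/2) := by
            rw [← ENNReal.ofReal_mul (by norm_num)]; norm_num
        _ ≤ ENNReal.ofReal 2 * (μ01 Uᶜ) ^ (1 / p.toReal) := mul_le_mul_right h11 _
    exact le_trans h12 (le_trans (le_of_eq h10.symm) (le_trans h9 h8))
  have hfin : (1:ℝ) ≤ ‖l • (T ^ m) x‖ := by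
    have h12 := ENNReal.toReal_mono (Lp.eLpNorm_ne_top (l • (T ^ m) x)) hlow
    rw [ENNReal.toReal_ofReal (by norm_num)] at h12
    rw [Lp.norm_def]
    exact h12
  linarith
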